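/- Let C ≥ 0 and let v : ℝ^d → ℝ be bounded, Lipschitz, and C-semiconvex, and let φ be its Hopf–Lax function for quadratic cost. Then for every t ∈ [0,1] and all x, z ∈ ℝ^d, φ(t, x+z) − 2φ(t,x) + φ(t, x−z) ≥ −C|z|². -/
import Mathlib


open Set

/-- The Hopf–Lax function for quadratic cost with terminal datum `v` at time `1`:
`φ(t,x) = sup_y ( v(y) - |x-y|²/(2(1-t)) )` for `t < 1`, and `φ(1,x) = v(x)`. -/
noncomputable def hopfLax (d : ℕ) (v : EuclideanSpace ℝ (Fin d) → ℝ)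
    (t : ℝ) (x : EuclideanSpace ℝ (Fin d)) : ℝ :=
  if t = 1 then v x
  else ⨆ y : EuclideanSpace ℝ (Fin d), (v y - ‖x - y‖ ^ 2 / (2 * (1 - t)))

lemma semiconvex_midpoint (d : ℕ) (C : ℝ)
    (v : EuclideanSpace ℝ (Fin d) → ℝ)
    (hsc : ConvexOn ℝ univ (fun x => v x + (C / 2) * ‖x‖ ^ 2)) :
    ∀ y z : EuclideanSpace ℝ (Fin d),
      2 * v y ≤ v (y + z) + v (y - z) + C * ‖z‖ ^ 2 := by
  intro y z
  have h := hsc.2 (mem_univ (y + z)) (mem_univ (y - z))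
    (by norm_num : (0:ℝ) ≤ 1/2) (by norm_num : (0:ℝ) ≤ 1/2) (by norm_num)
  have hmid : (1/2 : ℝ) • (y + z) + (1/2 : ℝ) • (y - z) = y := by
    module
  rw [hmid] at h
  have hpar : ‖y + z‖ ^ 2 + ‖y - z‖ ^ 2 = 2 * (‖y‖ ^ 2 + ‖z‖ ^ 2) := by
    have := parallelogram_law_with_norm ℝ y z
    nlinarith [this]
  simp only [smul_eq_mul] at h
  have hpar2 : C/2 * ‖y + z‖ ^ 2 + C/2 * ‖y - z‖ ^ 2 = C * ‖y‖ ^ 2 + C * ‖z‖ ^ 2 := by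
    linear_combination (C/2) * hpar
  linarith [h, hpar2]

lemma hopfLax_bddAbove (d : ℕ) (v : EuclideanSpace ℝ (Fin d) → ℝ) (B : ℝ)
    (hB : ∀ x, |v x| ≤ B) {t : ℝ} (ht : t < 1) (w : EuclideanSpace ℝ (Fin d)) :
    BddAbove (range fun y => v y - ‖w - y‖ ^ 2 / (2 * (1 - t))) := by
  refine ⟨B, ?_⟩
  rintro _ ⟨y, rfl⟩
  have h1 : v y ≤ B := (abs_le.mp (hB y)).2
  have h2 : 0 ≤ ‖w - y‖ ^ 2 / (2 * (1 - t)) := div_nonneg (by positivity) (by linarith)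
  simp only
  linarith

/-- If `v` is bounded, Lipschitz and `C`-semiconvex (i.e.
`x ↦ v(x) + (C/2)|x|²` is convex), then for every `t ∈ [0,1]` the Hopf–Lax
function satisfies `φ(t,x+z) - 2φ(t,x) + φ(t,x-z) ≥ -C|z|²`. -/
theorem hopfLax_semiconvex
    (d : ℕ) (C : ℝ) (hC : 0 ≤ C)
    (v : EuclideanSpace ℝ (Fin d) → ℝ) (B : ℝ) (L : NNReal)
    (hB : ∀ x, |v x| ≤ B) (hL : LipschitzWith L v)
    (hsc : ConvexOn ℝ univ (fun x => v x + (C / 2) * ‖x‖ ^ 2)) :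
    ∀ t ∈ Icc (0 : ℝ) 1, ∀ x z : EuclideanSpace ℝ (Fin d),
      hopfLax d v t (x + z) - 2 * hopfLax d v t x + hopfLax d v t (x - z)
        ≥ -C * ‖z‖ ^ 2 := by
  intro t ht x z
  have hmid := semiconvex_midpoint d C v hsc
  by_cases ht1 : t = 1
  · subst ht1
    simp only [hopfLax, if_true, reduceIte]
    have := hmid x z
    linarith
  · have htlt : t < 1 := lt_of_le_of_ne ht.2 ht1
    simp only [hopfLax, if_neg ht1]
    set S1 := ⨆ y : EuclideanSpace ℝ (Fin d), (v y - ‖x + z - y‖ ^ 2 / (2 * (1 - t))) with hS1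
    set S2 := ⨆ y : EuclideanSpace ℝ (Fin d), (v y - ‖x - z - y‖ ^ 2 / (2 * (1 - t))) with hS2
    have key : (⨆ y : EuclideanSpace ℝ (Fin d), (v y - ‖x - y‖ ^ 2 / (2 * (1 - t))))
        ≤ (S1 + S2 + C * ‖z‖ ^ 2) / 2 := by
      apply ciSup_le
      intro y
      have h1 : v (y + z) - ‖x + z - (y + z)‖ ^ 2 / (2 * (1 - t)) ≤ S1 :=
        le_ciSup (hopfLax_bddAbove d v B hB htlt (x + z)) (y + z)
      have h2 : v (y - z) - ‖x - z - (y - z)‖ ^ 2 / (2 * (1 - t)) ≤ S2 :=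
        le_ciSup (hopfLax_bddAbove d v B hB htlt (x - z)) (y - z)
      have e1 : x + z - (y + z) = x - y := by abel
      have e2 : x - z - (y - z) = x - y := by abel
      rw [e1] at h1
      rw [e2] at h2
      have := hmid y z
      linarith
    linarith
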